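/- Two hyperbolic planes with distinct negative curvatures −K and −K′ (K, K′ > 0, K ≠ K′) do not admit a configuration of four points (equilateral triangle of side 1 together with the midpoint of one side) with all six pairwise distances equal; specifically, the median lengths of unit equilateral triangles differ. -/

import Mathlib

open Real
open scoped Nat

private lemma expHasSum (x : ℝ) : HasSum (fun n : ℕ => x ^ n / n !) (Real.exp x) := by
  rw [Real.exp_eq_exp_ℝ]
  exact NormedSpace.expSeries_div_hasSum_exp x

private lemma hasSum_h (a b x : ℝ) :
    HasSum (fun n : ℕ =>
        (a ^ n + (-a) ^ n + b ^ n + (-b) ^ n - 2 * 1 ^ n - 2 * (-1 : ℝ) ^ n) * x ^ n / n !)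
      (2 * (Real.cosh (a * x) + Real.cosh (b * x) - 2 * Real.cosh x)) := by
  have H := (((((expHasSum (a * x)).add (expHasSum (-(a * x)))).add
      ((expHasSum (b * x)).add (expHasSum (-(b * x))))).sub
      ((expHasSum x).mul_left 2)).sub ((expHasSum (-x)).mul_left 2))
  have hfun : ∀ n : ℕ,
      (a ^ n + (-a) ^ n + b ^ n + (-b) ^ n - 2 * 1 ^ n - 2 * (-1 : ℝ) ^ n) * x ^ n / n ! =
      ((a * x) ^ n / n ! + (-(a * x)) ^ n / n ! + ((b * x) ^ n / n ! + (-(b * x)) ^ n / n !)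
        - 2 * (x ^ n / n !)) - 2 * ((-x) ^ n / n !) := by
    intro n
    have h1 : (-(a * x)) ^ n = (-a) ^ n * x ^ n := by rw [neg_mul_eq_neg_mul, mul_pow]
    have h2 : (-(b * x)) ^ n = (-b) ^ n * x ^ n := by rw [neg_mul_eq_neg_mul, mul_pow]
    have h3 : (-x) ^ n = (-1 : ℝ) ^ n * x ^ n := by rw [← neg_one_mul, mul_pow]
    rw [h1, h2, h3, mul_pow, mul_pow]
    ring
  have hval : 2 * (Real.cosh (a * x) + Real.cosh (b * x) - 2 * Real.cosh x) =
      ((Real.exp (a * x) + Real.exp (-(a * x)) + (Real.exp (b * x) + Real.exp (-(b * x)))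
        - 2 * Real.exp x) - 2 * Real.exp (-x)) := by
    rw [Real.cosh_eq, Real.cosh_eq, Real.cosh_eq]; ring
  rw [hval]
  exact (funext hfun : _) ▸ H

private lemma stepIneq (m : ℝ) (hm1 : 1/2 < m) (hm2 : m < 1) (X Y : ℝ)
    (hY0 : 0 < Y) (hY : Y ≤ (m-1/2)^2) (hXY : 2 ≤ X + Y) :
    2 < X*(m+1/2)^2 + Y*(m-1/2)^2 := by
  nlinarith [mul_le_mul_of_nonneg_right hY (by nlinarith : (0:ℝ) ≤ 2*m),
    mul_le_mul_of_nonneg_left hXY (by nlinarith : (0:ℝ) ≤ (m+1/2)^2),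
    mul_pos (by linarith : (0:ℝ) < m - 1/2) (by nlinarith : (0:ℝ) < -2*m^2+3*m+3)]

private lemma key (m s t : ℝ) (hm1 : 1/2 < m) (hm2 : m < 1) (hs : 0 < s) (hst : s < t)
    (Hs : Real.cosh ((m + 1/2) * s) + Real.cosh ((m - 1/2) * s) - 2 * Real.cosh s = 0)
    (Ht : Real.cosh ((m + 1/2) * t) + Real.cosh ((m - 1/2) * t) - 2 * Real.cosh t = 0) :
    False := by
  classical
  set a := m + 1/2 with ha_def
  set b := m - 1/2 with hb_def
  have ha : 1 < a := by rw [ha_def]; linarith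
  have hb0 : 0 < b := by rw [hb_def]; linarith
  have hb1 : b < 1 := by rw [hb_def]; linarith
  have ht : 0 < t := hs.trans hst
  set e : ℕ → ℝ := fun n =>
    a ^ n + (-a) ^ n + b ^ n + (-b) ^ n - 2 * 1 ^ n - 2 * (-1:ℝ) ^ n with he_def
  have e_even : ∀ k : ℕ, e (2 * k) = 2 * (a ^ (2*k) + b ^ (2*k) - 2) := by
    intro k
    have hev : Even (2 * k) := even_two_mul k
    simp only [he_def, hev.neg_pow, hev.neg_one_pow, one_pow]
    ring
  have e_odd : ∀ n : ℕ, Odd n → e n = 0 := by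
    intro n hn
    simp only [he_def, hn.neg_pow, hn.neg_one_pow, one_pow]
    ring
  have step : ∀ k : ℕ, 1 ≤ k → 0 ≤ e (2 * k) → 0 < e (2 * (k + 1)) := by
    intro k hk h0
    rw [e_even] at h0 ⊢
    have hY0 : 0 < b ^ (2 * k) := pow_pos hb0 _
    have hY : b ^ (2 * k) ≤ b ^ 2 := pow_le_pow_of_le_one hb0.le hb1.le (by omega)
    have hXY : 2 ≤ a ^ (2 * k) + b ^ (2 * k) := by linarith
    rw [hb_def] at hY
    have h4 := stepIneq m hm1 hm2 (a ^ (2*k)) (b ^ (2*k)) hY0 hY hXY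
    rw [← ha_def, ← hb_def] at h4
    have h2 : a ^ (2 * (k+1)) = a ^ (2 * k) * a ^ 2 := by ring
    have h3 : b ^ (2 * (k+1)) = b ^ (2 * k) * b ^ 2 := by ring
    rw [h2, h3]; linarith
  obtain ⟨j, hj⟩ := pow_unbounded_of_one_lt (2:ℝ) ha
  set k0 := j + 1 with hk0_def
  have hk0pow : 2 < a ^ (2 * k0) :=
    lt_of_lt_of_le hj (pow_le_pow_right₀ ha.le (by omega))
  have epos : ∀ n : ℕ, k0 ≤ n → 0 < e (2 * n) := by
    intro n hn
    induction n, hn using Nat.le_induction with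
    | base => rw [e_even]; have := pow_pos hb0 (2*k0); linarith
    | succ n hn ih => exact step n (by omega) ih.le
  set N := Nat.findGreatest (fun k => e (2 * k) ≤ 0) k0 with hN_def
  have hgt : ∀ n : ℕ, N < n → 0 < e (2 * n) := by
    intro n hn
    by_cases hnk : n ≤ k0
    · have h9 := Nat.findGreatest_is_greatest (P := fun k => e (2*k) ≤ 0) hn hnk
      exact lt_of_not_ge (by simpa using h9)
    · exact epos n (by omega)
  have hup : ∀ (n j : ℕ), 1 ≤ n → 0 ≤ e (2*n) → 0 < e (2*(n + j + 1)) := by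
    intro n j hn h0
    induction j with
    | zero => simpa using step n hn h0
    | succ j ih =>
        have h5 := step (n + j + 1) (by omega) ih.le
        have : n + (j + 1) + 1 = n + j + 1 + 1 := by omega
        rw [this]; exact h5
  have hle : ∀ n : ℕ, 1 ≤ n → n ≤ N → e (2 * n) ≤ 0 := by
    intro n h1 h2
    by_contra hpos
    push_neg at hpos
    have hNle : e (2 * N) ≤ 0 :=
      Nat.findGreatest_of_ne_zero (P := fun k => e (2*k) ≤ 0) hN_def.symm (by omega)
    rcases Nat.lt_or_ge n N with h | h
    · have h6 := hup n (N - n - 1) h1 hpos.le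
      rw [show n + (N - n - 1) + 1 = N by omega] at h6
      linarith
    · have : n = N := le_antisymm h2 h
      rw [this] at hpos; linarith
  -- the series at s and t
  have Hs' : HasSum (fun n : ℕ => e n * s ^ n / n !) 0 := by
    have H := hasSum_h a b s
    rw [Hs, mul_zero] at H
    exact H
  have Ht' : HasSum (fun n : ℕ => e n * t ^ n / n !) 0 := by
    have H := hasSum_h a b t
    rw [Ht, mul_zero] at H
    exact H
  have Hc : HasSum
      (fun n : ℕ => e n * t ^ n / n ! * s ^ (2*N) - e n * s ^ n / n ! * t ^ (2*N)) 0 := by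
    have H := (Ht'.mul_right (s ^ (2*N))).sub (Hs'.mul_right (t ^ (2*N)))
    simpa using H
  have hd_eq : ∀ n : ℕ, e n * t ^ n / n ! * s ^ (2*N) - e n * s ^ n / n ! * t ^ (2*N)
      = e n * (t ^ n * s ^ (2*N) - s ^ n * t ^ (2*N)) / n ! := by
    intro n; ring
  have hfact : ∀ n : ℕ, (0:ℝ) < n ! := fun n => by positivity
  have hnonneg : ∀ n : ℕ,
      0 ≤ e n * t ^ n / n ! * s ^ (2*N) - e n * s ^ n / n ! * t ^ (2*N) := by
    intro n
    rw [hd_eq n]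
    apply div_nonneg _ (hfact n).le
    rcases Nat.even_or_odd n with ⟨k, hk⟩ | hodd
    · have hn2k : n = 2 * k := by omega
      subst hn2k
      rcases Nat.eq_zero_or_pos k with rfl | hk1
      · have : e (2 * 0) = 0 := by rw [e_even]; norm_num
        rw [this]; simp
      rcases le_or_gt k N with hkN | hkN
      · -- e ≤ 0 and factor ≤ 0
        have he1 : e (2 * k) ≤ 0 := hle k hk1 hkN
        have hq : t ^ (2*k) * s ^ (2*N) - s ^ (2*k) * t ^ (2*N) ≤ 0 := by
          have hsplit_s : s ^ (2*N) = s ^ (2*k) * s ^ (2*(N-k)) := by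
            rw [← pow_add]; congr 1; omega
          have hsplit_t : t ^ (2*N) = t ^ (2*k) * t ^ (2*(N-k)) := by
            rw [← pow_add]; congr 1; omega
          rw [hsplit_s, hsplit_t]
          have h7 : s ^ (2*(N-k)) ≤ t ^ (2*(N-k)) := pow_le_pow_left₀ hs.le hst.le _
          have h10 := mul_le_mul_of_nonneg_left h7
            (mul_pos (pow_pos hs (2*k)) (pow_pos ht (2*k))).le
          nlinarith [h10]
        exact mul_nonneg_of_nonpos_of_nonpos he1 hq
      · have he1 : 0 ≤ e (2 * k) := (hgt k hkN).le
        have hq : 0 ≤ t ^ (2*k) * s ^ (2*N) - s ^ (2*k) * t ^ (2*N) := by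
          have hsplit_s : s ^ (2*k) = s ^ (2*N) * s ^ (2*(k-N)) := by
            rw [← pow_add]; congr 1; omega
          have hsplit_t : t ^ (2*k) = t ^ (2*N) * t ^ (2*(k-N)) := by
            rw [← pow_add]; congr 1; omega
          rw [hsplit_s, hsplit_t]
          have h7 : s ^ (2*(k-N)) ≤ t ^ (2*(k-N)) := pow_le_pow_left₀ hs.le hst.le _
          have h10 := mul_le_mul_of_nonneg_left h7
            (mul_pos (pow_pos hs (2*N)) (pow_pos ht (2*N))).le
          nlinarith [h10]
        exact mul_nonneg he1 hq
    · rw [e_odd n hodd]; simp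
  have hpos : 0 < e (2*(N+1)) * t ^ (2*(N+1)) / ((2*(N+1)):ℕ)! * s ^ (2*N)
      - e (2*(N+1)) * s ^ (2*(N+1)) / ((2*(N+1)):ℕ)! * t ^ (2*N) := by
    rw [hd_eq (2*(N+1))]
    apply div_pos _ (hfact _)
    apply mul_pos (hgt (N+1) (by omega))
    have hsplit_s : s ^ (2*(N+1)) = s ^ (2*N) * s ^ 2 := by ring
    have hsplit_t : t ^ (2*(N+1)) = t ^ (2*N) * t ^ 2 := by ring
    rw [hsplit_s, hsplit_t]
    have h8 : s ^ 2 < t ^ 2 := by nlinarith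
    have h10 := mul_lt_mul_of_pos_left h8
      (mul_pos (pow_pos hs (2*N)) (pow_pos ht (2*N)))
    nlinarith [h10]
  have hle0 := le_hasSum Hc (2*(N+1)) (fun j _ => hnonneg j)
  linarith


private lemma cosh2mul (p q : ℝ) :
    2 * (Real.cosh p * Real.cosh q) = Real.cosh (p + q) + Real.cosh (p - q) := by
  rw [Real.cosh_add, Real.cosh_sub]; ring

private lemma m_gt_half (m s : ℝ) (hs : 0 < s) (hm : 0 ≤ m)
    (h : Real.cosh s = Real.cosh (s / 2) * Real.cosh (s * m)) : 1/2 < m := by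
  by_contra hc
  push_neg at hc
  have hsum : Real.cosh (s*m + s/2) + Real.cosh (s*m - s/2) = 2 * Real.cosh s := by
    rw [← cosh2mul (s*m) (s/2), h]; ring
  have h1 : Real.cosh (s*m + s/2) ≤ Real.cosh s := by
    rw [Real.cosh_le_cosh, abs_of_nonneg (by nlinarith : (0:ℝ) ≤ s*m + s/2), abs_of_pos hs]
    nlinarith
  have h2 : Real.cosh (s*m - s/2) < Real.cosh s := by
    rw [Real.cosh_lt_cosh, abs_of_pos hs]
    have := abs_le.2 ⟨(by nlinarith : -(s/2) ≤ s*m - s/2), (by nlinarith : s*m - s/2 ≤ s/2)⟩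
    linarith
  linarith

private lemma m_lt_one (m s : ℝ) (hs : 0 < s) (hm : 0 ≤ m)
    (h : Real.cosh s = Real.cosh (s / 2) * Real.cosh (s * m)) : m < 1 := by
  by_contra hc
  push_neg at hc
  have h1 : Real.cosh s ≤ Real.cosh (s * m) := by
    rw [Real.cosh_le_cosh, abs_of_pos hs, abs_of_pos (by nlinarith : (0:ℝ) < s * m)]
    nlinarith
  have h2 : 1 < Real.cosh (s / 2) := Real.one_lt_cosh.2 (by positivity)
  have h3 : 1 * Real.cosh (s * m) < Real.cosh (s / 2) * Real.cosh (s * m) :=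
    mul_lt_mul_of_pos_right h2 (Real.cosh_pos (s * m))
  rw [one_mul] at h3
  linarith

/-- Hyperbolic planes of distinct curvatures `−K ≠ −K′` give different median lengths for
unit equilateral triangles: if `m` (resp. `m′`) is the nonnegative solution of
`cosh(√K) = cosh(√K/2)·cosh(√K·m)` (resp. with `K′`), then `K ≠ K′` implies `m ≠ m′`,
so no distance-preserving configuration of the four points exists. -/
theorem stmt3 (K K' m m' : ℝ) (hK : 0 < K) (hK' : 0 < K') (hne : K ≠ K')
    (hm : 0 ≤ m) (hm' : 0 ≤ m')
    (h1 : Real.cosh (Real.sqrt K) = Real.cosh (Real.sqrt K / 2) * Real.cosh (Real.sqrt K * m))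
    (h2 : Real.cosh (Real.sqrt K') =
      Real.cosh (Real.sqrt K' / 2) * Real.cosh (Real.sqrt K' * m')) :
    m ≠ m' := by
  intro heq
  subst heq
  set s := Real.sqrt K with hs_def
  set t := Real.sqrt K' with ht_def
  have hs : 0 < s := Real.sqrt_pos.2 hK
  have ht : 0 < t := Real.sqrt_pos.2 hK'
  have hst : s ≠ t := by
    intro h
    exact hne ((Real.sq_sqrt hK.le).symm.trans (by rw [← hs_def, h, ht_def, Real.sq_sqrt hK'.le]))
  have hm1 : 1/2 < m := m_gt_half m s hs hm h1
  have hm2 : m < 1 := m_lt_one m s hs hm h1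
  have Hs : Real.cosh ((m + 1/2) * s) + Real.cosh ((m - 1/2) * s) - 2 * Real.cosh s = 0 := by
    have hc := cosh2mul (s*m) (s/2)
    have e1 : s*m + s/2 = (m + 1/2)*s := by ring
    have e2 : s*m - s/2 = (m - 1/2)*s := by ring
    rw [e1, e2] at hc
    linear_combination -hc - 2*h1
  have Ht : Real.cosh ((m + 1/2) * t) + Real.cosh ((m - 1/2) * t) - 2 * Real.cosh t = 0 := by
    have hc := cosh2mul (t*m) (t/2)
    have e1 : t*m + t/2 = (m + 1/2)*t := by ring
    have e2 : t*m - t/2 = (m - 1/2)*t := by ring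
    rw [e1, e2] at hc
    linear_combination -hc - 2*h2
  rcases hst.lt_or_gt with h | h
  · exact key m s t hm1 hm2 hs h Hs Ht
  · exact key m t s hm1 hm2 ht h Ht Hs
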